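/- Let G be a 2-connected series-parallel multigraph built from an initial edge uv by series and parallel operations, let t be a piece of an edge e = ab in the construction (i.e., t was created by subdividing e or one of its descendants), and let s be a vertex that is neither a piece nor an endpoint of e. Then {a, b} is an st-separator of G: every path from s to t in G contains a or b. -/
import Mathlib


/-- `S` is an `st`-separator in `G`. -/
def IsSep {V : Type*} (G : SimpleGraph V) (s t : V) (S : Set V) : Prop :=
  s ∉ S ∧ t ∉ S ∧ ∀ p : G.Walk s t, ∃ w ∈ S, w ∈ p.support

/-- Construction terms for two-terminal series-parallel (multi)graphs:
a single edge, a series composition through a middle vertex (covering edge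
subdivision), or a parallel composition (edge duplication). -/
inductive SPT (V : Type*) : V → V → Type _
  | edge (a b : V) : SPT V a b
  | series (a m b : V) : SPT V a m → SPT V m b → SPT V a b
  | parallel (a b : V) : SPT V a b → SPT V a b → SPT V a b

namespace SPT

variable {V : Type*}

/-- Vertices of a series-parallel term. -/
def verts : ∀ {a b : V}, SPT V a b → Set V
  | a, b, .edge _ _ => {a, b}
  | _, _, .series _ _ _ t₁ t₂ => t₁.verts ∪ t₂.verts
  | _, _, .parallel _ _ t₁ t₂ => t₁.verts ∪ t₂.verts

/-- Edges of a series-parallel term. -/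
def edges : ∀ {a b : V}, SPT V a b → Set (Sym2 V)
  | a, b, .edge _ _ => {s(a, b)}
  | _, _, .series _ _ _ t₁ t₂ => t₁.edges ∪ t₂.edges
  | _, _, .parallel _ _ t₁ t₂ => t₁.edges ∪ t₂.edges

/-- Well-formedness: the vertices created inside the two parts of a
composition are fresh, i.e. the parts only share the prescribed terminals. -/
def WF : ∀ {a b : V}, SPT V a b → Prop
  | a, b, .edge _ _ => a ≠ b
  | _, _, .series _ m _ t₁ t₂ =>
      t₁.WF ∧ t₂.WF ∧ t₁.verts ∩ t₂.verts = {m}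
  | a, b, .parallel _ _ t₁ t₂ =>
      t₁.WF ∧ t₂.WF ∧ t₁.verts ∩ t₂.verts = {a, b}

/-- `Sub t t'`: `t` is the subterm of `t'` that replaced some edge of the
construction (so the internal vertices of `t` are exactly the pieces of that
edge). -/
inductive Sub : ∀ {a b c d : V}, SPT V a b → SPT V c d → Prop
  | refl {a b : V} (t : SPT V a b) : Sub t t
  | seriesLeft {a b c m d : V} {t : SPT V a b} {t₁ : SPT V c m} {t₂ : SPT V m d} :
      Sub t t₁ → Sub t (SPT.series c m d t₁ t₂)
  | seriesRight {a b c m d : V} {t : SPT V a b} {t₁ : SPT V c m} {t₂ : SPT V m d} :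
      Sub t t₂ → Sub t (SPT.series c m d t₁ t₂)
  | parallelLeft {a b c d : V} {t : SPT V a b} {t₁ t₂ : SPT V c d} :
      Sub t t₁ → Sub t (SPT.parallel c d t₁ t₂)
  | parallelRight {a b c d : V} {t : SPT V a b} {t₁ t₂ : SPT V c d} :
      Sub t t₂ → Sub t (SPT.parallel c d t₁ t₂)

end SPT

namespace SPT

variable {V : Type*}

lemma left_mem_verts : ∀ {a b : V} (t : SPT V a b), a ∈ t.verts
  | _, _, .edge _ _ => Or.inl rfl
  | _, _, .series _ _ _ t₁ _ => Or.inl (left_mem_verts t₁)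
  | _, _, .parallel _ _ t₁ _ => Or.inl (left_mem_verts t₁)

lemma right_mem_verts : ∀ {a b : V} (t : SPT V a b), b ∈ t.verts
  | _, _, .edge _ _ => Or.inr rfl
  | _, _, .series _ _ _ _ t₂ => Or.inr (right_mem_verts t₂)
  | _, _, .parallel _ _ t₁ _ => Or.inl (right_mem_verts t₁)

lemma verts_subset_of_sub {a b c d : V} {t : SPT V a b} {t' : SPT V c d}
    (h : Sub t t') : t.verts ⊆ t'.verts := by
  induction h with
  | refl => exact subset_rfl
  | seriesLeft _ ih => exact ih.trans Set.subset_union_left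
  | seriesRight _ ih => exact ih.trans Set.subset_union_right
  | parallelLeft _ ih => exact ih.trans Set.subset_union_left
  | parallelRight _ ih => exact ih.trans Set.subset_union_right

lemma endpoints_mem_verts : ∀ {a b : V} (t : SPT V a b) (x y : V),
    s(x, y) ∈ t.edges → x ∈ t.verts ∧ y ∈ t.verts
  | _, _, .edge a b, x, y, h => by
      simp only [edges, Set.mem_singleton_iff, Sym2.eq_iff] at h
      rcases h with ⟨rfl, rfl⟩ | ⟨rfl, rfl⟩
      · exact ⟨Or.inl rfl, Or.inr rfl⟩
      · exact ⟨Or.inr rfl, Or.inl rfl⟩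
  | _, _, .series _ _ _ t₁ t₂, x, y, h => by
      rcases h with h | h
      · exact ⟨Or.inl (endpoints_mem_verts t₁ x y h).1, Or.inl (endpoints_mem_verts t₁ x y h).2⟩
      · exact ⟨Or.inr (endpoints_mem_verts t₂ x y h).1, Or.inr (endpoints_mem_verts t₂ x y h).2⟩
  | _, _, .parallel _ _ t₁ t₂, x, y, h => by
      rcases h with h | h
      · exact ⟨Or.inl (endpoints_mem_verts t₁ x y h).1, Or.inl (endpoints_mem_verts t₁ x y h).2⟩
      · exact ⟨Or.inr (endpoints_mem_verts t₂ x y h).1, Or.inr (endpoints_mem_verts t₂ x y h).2⟩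

/-- Terminals of a host term that lie inside a subterm must be terminals of it. -/
lemma terminal_of_sub {a b c d : V} {t : SPT V a b} {t' : SPT V c d}
    (h : Sub t t') (hWF : t'.WF) :
    (c ∈ t.verts → c = a ∨ c = b) ∧ (d ∈ t.verts → d = a ∨ d = b) := by
  induction h with
  | refl => exact ⟨fun _ => Or.inl rfl, fun _ => Or.inr rfl⟩
  | seriesLeft hs ih =>
      rename_i c m d tt t₁ t₂
      obtain ⟨h1, h2, h3⟩ := hWF
      refine ⟨(ih h1).1, fun hd => ?_⟩
      have : d ∈ t₁.verts ∩ t₂.verts :=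
        ⟨verts_subset_of_sub hs hd, right_mem_verts t₂⟩
      rw [h3, Set.mem_singleton_iff] at this
      subst this
      exact (ih h1).2 hd
  | seriesRight hs ih =>
      rename_i c m d tt t₁ t₂
      obtain ⟨h1, h2, h3⟩ := hWF
      refine ⟨fun hc => ?_, (ih h2).2⟩
      have : c ∈ t₁.verts ∩ t₂.verts :=
        ⟨left_mem_verts t₁, verts_subset_of_sub hs hc⟩
      rw [h3, Set.mem_singleton_iff] at this
      subst this
      exact (ih h2).1 hc
  | parallelLeft hs ih => exact ih hWF.1
  | parallelRight hs ih => exact ih hWF.2.1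

/-- An edge of the host with an endpoint internal to the subterm is an edge
of the subterm. -/
lemma edge_of_sub {a b c d : V} {t : SPT V a b} {t' : SPT V c d}
    (h : Sub t t') (hWF : t'.WF) :
    ∀ x y : V, s(x, y) ∈ t'.edges → x ∈ t.verts → x ≠ a → x ≠ b →
      s(x, y) ∈ t.edges := by
  induction h with
  | refl => exact fun x y he _ _ _ => he
  | seriesLeft hs ih =>
      rename_i t₁ t₂
      obtain ⟨h1, h2, h3⟩ := hWF
      intro x y he hx hxa hxb
      rcases he with he | he
      · exact ih h1 x y he hx hxa hxb
      · exfalso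
        have hx1 : x ∈ t₁.verts ∩ t₂.verts :=
          ⟨verts_subset_of_sub hs hx, (endpoints_mem_verts t₂ x y he).1⟩
        rw [h3, Set.mem_singleton_iff] at hx1
        subst hx1
        rcases (terminal_of_sub hs h1).2 hx with h | h
        · exact hxa h
        · exact hxb h
  | seriesRight hs ih =>
      rename_i t₁ t₂
      obtain ⟨h1, h2, h3⟩ := hWF
      intro x y he hx hxa hxb
      rcases he with he | he
      · exfalso
        have hx1 : x ∈ t₁.verts ∩ t₂.verts :=
          ⟨(endpoints_mem_verts t₁ x y he).1, verts_subset_of_sub hs hx⟩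
        rw [h3, Set.mem_singleton_iff] at hx1
        subst hx1
        rcases (terminal_of_sub hs h2).1 hx with h | h
        · exact hxa h
        · exact hxb h
      · exact ih h2 x y he hx hxa hxb
  | parallelLeft hs ih =>
      rename_i t₁ t₂
      obtain ⟨h1, h2, h3⟩ := hWF
      intro x y he hx hxa hxb
      rcases he with he | he
      · exact ih h1 x y he hx hxa hxb
      · exfalso
        have hx1 : x ∈ t₁.verts ∩ t₂.verts :=
          ⟨verts_subset_of_sub hs hx, (endpoints_mem_verts t₂ x y he).1⟩
        rw [h3] at hx1
        rcases hx1 with rfl | rfl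
        · rcases (terminal_of_sub hs h1).1 hx with h | h
          · exact hxa h
          · exact hxb h
        · rcases (terminal_of_sub hs h1).2 hx with h | h
          · exact hxa h
          · exact hxb h
  | parallelRight hs ih =>
      rename_i t₁ t₂
      obtain ⟨h1, h2, h3⟩ := hWF
      intro x y he hx hxa hxb
      rcases he with he | he
      · exfalso
        have hx1 : x ∈ t₁.verts ∩ t₂.verts :=
          ⟨(endpoints_mem_verts t₁ x y he).1, verts_subset_of_sub hs hx⟩
        rw [h3] at hx1
        rcases hx1 with rfl | rfl
        · rcases (terminal_of_sub hs h2).1 hx with h | h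
          · exact hxa h
          · exact hxb h
        · rcases (terminal_of_sub hs h2).2 hx with h | h
          · exact hxa h
          · exact hxb h
      · exact ih h2 x y he hx hxa hxb

end SPT

lemma key_walk {V : Type*} {u v a b : V} {T : SPT V u v} (hWF : T.WF)
    {T' : SPT V a b} (hsub : SPT.Sub T' T)
    {t : V} (ht : t ∈ T'.verts) :
    ∀ {x : V} (p : (SimpleGraph.fromEdgeSet T.edges).Walk x t),
      x ∉ T'.verts → ∃ w ∈ ({a, b} : Set V), w ∈ p.support
  | _, SimpleGraph.Walk.nil, hx => absurd ht hx
  | x, SimpleGraph.Walk.cons (v := y) h q, hx => by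
      by_cases hy : y ∈ T'.verts
      · by_cases hya : y = a
        · exact ⟨a, Or.inl rfl, by simp [← hya, SimpleGraph.Walk.support_cons]⟩
        · by_cases hyb : y = b
          · exact ⟨b, Or.inr rfl, by simp [← hyb, SimpleGraph.Walk.support_cons]⟩
          · exfalso
            rw [SimpleGraph.fromEdgeSet_adj] at h
            have he : s(y, x) ∈ T.edges := by rw [Sym2.eq_swap]; exact h.1
            have := SPT.edge_of_sub hsub hWF y x he hy hya hyb
            exact hx (SPT.endpoints_mem_verts T' y x this).2
      · obtain ⟨w, hw, hws⟩ := key_walk hWF hsub ht q hy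
        exact ⟨w, hw, by simp [SimpleGraph.Walk.support_cons, hws]⟩

/-- Let `G` be the 2-connected series-parallel graph built (from an edge `uv`)
by a term `T`, let `T'` be the subterm with terminals `a, b` corresponding to
an edge `e = ab` of the construction, let `t` be a piece of `e` (an internal
vertex of `T'`) and `s` a vertex that is neither a piece nor an endpoint of
`e`.  Then `{a, b}` is an `st`-separator of `G`. -/
theorem stmt12 {V : Type*} (u v a b : V) (T : SPT V u v) (hWF : T.WF)
    (T' : SPT V a b) (hsub : SPT.Sub T' T)
    (s t : V) (ht : t ∈ T'.verts) (hta : t ≠ a) (htb : t ≠ b)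
    (hs : s ∉ T'.verts) (hsa : s ≠ a) (hsb : s ≠ b) :
    IsSep (SimpleGraph.fromEdgeSet T.edges) s t {a, b} := by
  refine ⟨by simp [hsa, hsb], by simp [hta, htb], fun p => ?_⟩
  obtain ⟨w, hw, hws⟩ := key_walk hWF hsub ht p hs
  exact ⟨w, hw, hws⟩
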